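/- Let S and A be finite nonempty types, let γ ∈ ℝ with 0 ≤ γ < 1, let P : S → A → S → ℝ be a transition kernel, let Q : S → A → ℝ, let ρUN : S → A → ℝ with 0 ≤ ρUN s a for all s, a, let μ0 : S → ℝ with 0 < μ0 s for all s, and let ψ : ℝ → ℝ be monotone nondecreasing. For π : S → A → ℝ define Vπ s = ∑ a, (π s a * Q s a + negMulLog (π s a)), rπ s a = Q s a − γ * ∑ s', P s a s' * Vπ s', and L π = (∑ s, ∑ a, ρUN s a * rπ s a) − (1 − γ) * (∑ s, μ0 s * Vπ s) + (∑ s, ∑ a, ψ (rπ s a)). Define the softmax policy πQ by πQ s a = exp (Q s a) / ∑ a', exp (Q s a'). Then πQ is a policy (πQ s ∈ stdSimplex ℝ A for all s), L πQ ≤ L π for every policy π, and if π is a policy with L π = L πQ then π = πQ; i.e., πQ is the unique minimizer of L over policies. -/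

import Mathlib

open Finset

open Real in
lemma gibbs_pt {x q Z : ℝ} (hx : 0 ≤ x) (hZ : 0 < Z) :
    (x * q + negMulLog x ≤ exp q / Z - x + x * Real.log Z) ∧
    (x * q + negMulLog x = exp q / Z - x + x * Real.log Z ↔ x = exp q / Z) := by
  rcases eq_or_lt_of_le hx with h0 | h0
  · have hpos : 0 < exp q / Z := div_pos (exp_pos q) hZ
    constructor
    · simp [← h0]; positivity
    · constructor
      · intro h; simp [← h0] at h ⊢; linarith
      · intro h; exfalso; rw [← h0] at h; linarith
  · set t := exp q / (x * Z) with ht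
    have hxZ : 0 < x * Z := mul_pos h0 hZ
    have htpos : 0 < t := div_pos (exp_pos q) hxZ
    have hlogt : Real.log t = q - Real.log x - Real.log Z := by
      rw [ht, Real.log_div (exp_pos q).ne' hxZ.ne', Real.log_exp,
        Real.log_mul h0.ne' hZ.ne']; ring
    have hF : exp q / Z - x + x * Real.log Z - (x * q + negMulLog x)
        = x * (t - 1 - Real.log t) := by
      rw [hlogt, negMulLog]
      have : x * t = exp q / Z := by
        rw [ht]; field_simp
      nlinarith [this]
    have hle : Real.log t ≤ t - 1 := Real.log_le_sub_one_of_pos htpos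
    constructor
    · nlinarith
    · constructor
      · intro h
        have h1 : x * (t - 1 - Real.log t) = 0 := by linarith [hF, h]
        have h2 : t - 1 - Real.log t = 0 := by
          rcases mul_eq_zero.1 h1 with h | h
          · exact absurd h h0.ne'
          · exact h
        have ht1 : t = 1 := by
          by_contra hne
          have := Real.log_lt_sub_one_of_pos htpos hne
          linarith
        rw [ht, div_eq_one_iff_eq hxZ.ne'] at ht1
        field_simp
        linarith [ht1]
      · intro h
        have ht1 : t = 1 := by
          rw [ht, h]; field_simp
        have : Real.log t = 0 := by rw [ht1, Real.log_one]
        nlinarith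

open Real in
lemma gibbs {A : Type*} [Fintype A] [Nonempty A] (Q : A → ℝ) (p : A → ℝ)
    (hp : p ∈ stdSimplex ℝ A) :
    (∑ a, (p a * Q a + negMulLog (p a)) ≤ Real.log (∑ a, exp (Q a))) ∧
    (∑ a, (p a * Q a + negMulLog (p a)) = Real.log (∑ a, exp (Q a)) ↔
      ∀ a, p a = exp (Q a) / ∑ a', exp (Q a')) := by
  classical
  obtain ⟨hp0, hp1⟩ := hp
  set Z := ∑ a, exp (Q a) with hZdef
  have hZ : 0 < Z := Finset.sum_pos (fun a _ => Real.exp_pos _) Finset.univ_nonempty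
  have key := fun a => gibbs_pt (x := p a) (q := Q a) (Z := Z) (hp0 a) hZ
  set F : A → ℝ := fun a => exp (Q a) / Z - p a + p a * Real.log Z
    - (p a * Q a + negMulLog (p a)) with hFdef
  have hF0 : ∀ a ∈ Finset.univ, 0 ≤ F a := fun a _ => by
    have := (key a).1; simp only [hFdef]; linarith
  have hsumF : ∑ a, F a = Real.log Z - ∑ a, (p a * Q a + negMulLog (p a)) := by
    simp only [hFdef]
    rw [Finset.sum_sub_distrib]
    congr 1
    rw [Finset.sum_add_distrib, Finset.sum_sub_distrib, ← Finset.sum_div,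
      ← hZdef, div_self hZ.ne', ← Finset.sum_mul, hp1]
    ring
  constructor
  · have := Finset.sum_nonneg hF0
    linarith [hsumF ▸ this]
  · constructor
    · intro h
      have hz : ∑ a, F a = 0 := by rw [hsumF, h]; ring
      intro a
      have := (Finset.sum_eq_zero_iff_of_nonneg hF0).1 hz a (Finset.mem_univ a)
      have heq : p a * Q a + negMulLog (p a) = exp (Q a) / Z - p a + p a * Real.log Z := by
        simp only [hFdef] at this; linarith
      exact (key a).2.1 heq
    · intro h
      have hz : ∀ a ∈ Finset.univ, F a = 0 := fun a _ => by
        have := (key a).2.2 (h a); simp only [hFdef]; linarith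
      have := Finset.sum_eq_zero hz
      rw [hsumF] at this; linarith

/-- Unique-minimizer claim of Proposition 2(i): the softmax policy `πQ` is the
unique minimizer of `L(·, Q)` over the set of policies. -/
theorem stmt_6 {S A : Type*} [Fintype S] [Fintype A] [Nonempty S] [Nonempty A]
    (γ : ℝ) (hγ0 : 0 ≤ γ) (hγ1 : γ < 1)
    (P : S → A → S → ℝ)
    (hP0 : ∀ s a s', 0 ≤ P s a s') (hP1 : ∀ s a, ∑ s', P s a s' = 1)
    (Q : S → A → ℝ)
    (ρUN : S → A → ℝ) (hρUN : ∀ s a, 0 ≤ ρUN s a)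
    (μ0 : S → ℝ) (hμ0 : ∀ s, 0 < μ0 s)
    (ψ : ℝ → ℝ) (hψmono : Monotone ψ)
    (Vπ : (S → A → ℝ) → S → ℝ)
    (hVπ : ∀ π s, Vπ π s = ∑ a, (π s a * Q s a + Real.negMulLog (π s a)))
    (rπ : (S → A → ℝ) → S → A → ℝ)
    (hrπ : ∀ π s a, rπ π s a = Q s a - γ * ∑ s', P s a s' * Vπ π s')
    (L : (S → A → ℝ) → ℝ)
    (hL : ∀ π, L π = (∑ s, ∑ a, ρUN s a * rπ π s a)
      - (1 - γ) * (∑ s, μ0 s * Vπ π s) + (∑ s, ∑ a, ψ (rπ π s a)))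
    (πQ : S → A → ℝ)
    (hπQ : ∀ s a, πQ s a = Real.exp (Q s a) / ∑ a', Real.exp (Q s a')) :
    (∀ s, πQ s ∈ stdSimplex ℝ A) ∧
    (∀ π : S → A → ℝ, (∀ s, π s ∈ stdSimplex ℝ A) → L πQ ≤ L π) ∧
    (∀ π : S → A → ℝ, (∀ s, π s ∈ stdSimplex ℝ A) → L π = L πQ → π = πQ) := by
  classical
  have hZ : ∀ s, 0 < ∑ a', Real.exp (Q s a') :=
    fun s => Finset.sum_pos (fun a _ => Real.exp_pos _) Finset.univ_nonempty
  have hπQmem : ∀ s, πQ s ∈ stdSimplex ℝ A := by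
    intro s
    constructor
    · intro a; rw [hπQ s a]; positivity
    · simp_rw [hπQ s]
      rw [← Finset.sum_div, div_self (hZ s).ne']
  -- value of πQ
  have hVQ : ∀ s, Vπ πQ s = Real.log (∑ a', Real.exp (Q s a')) := by
    intro s
    rw [hVπ]
    exact (gibbs (Q s) (πQ s) (hπQmem s)).2.2 (hπQ s)
  have hVle : ∀ (π : S → A → ℝ), (∀ s, π s ∈ stdSimplex ℝ A) →
      ∀ s, Vπ π s ≤ Vπ πQ s := by
    intro π hπ s
    rw [hVπ, hVQ]
    exact (gibbs (Q s) (π s) (hπ s)).1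
  have hrle : ∀ (π : S → A → ℝ), (∀ s, π s ∈ stdSimplex ℝ A) →
      ∀ s a, rπ πQ s a ≤ rπ π s a := by
    intro π hπ s a
    rw [hrπ, hrπ]
    have : ∑ s', P s a s' * Vπ π s' ≤ ∑ s', P s a s' * Vπ πQ s' :=
      Finset.sum_le_sum fun s' _ =>
        mul_le_mul_of_nonneg_left (hVle π hπ s') (hP0 s a s')
    nlinarith
  have hLle : ∀ (π : S → A → ℝ), (∀ s, π s ∈ stdSimplex ℝ A) → L πQ ≤ L π := by
    intro π hπ
    rw [hL, hL]
    have h1 : ∑ s, ∑ a, ρUN s a * rπ πQ s a ≤ ∑ s, ∑ a, ρUN s a * rπ π s a :=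
      Finset.sum_le_sum fun s _ => Finset.sum_le_sum fun a _ =>
        mul_le_mul_of_nonneg_left (hrle π hπ s a) (hρUN s a)
    have h2 : ∑ s, μ0 s * Vπ π s ≤ ∑ s, μ0 s * Vπ πQ s :=
      Finset.sum_le_sum fun s _ =>
        mul_le_mul_of_nonneg_left (hVle π hπ s) (hμ0 s).le
    have h3 : ∑ s, ∑ a, ψ (rπ πQ s a) ≤ ∑ s, ∑ a, ψ (rπ π s a) :=
      Finset.sum_le_sum fun s _ => Finset.sum_le_sum fun a _ =>
        hψmono (hrle π hπ s a)
    nlinarith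
  refine ⟨hπQmem, hLle, ?_⟩
  intro π hπ hLeq
  by_contra hne
  obtain ⟨s0, hs0⟩ : ∃ s0, π s0 ≠ πQ s0 := by
    by_contra h
    push_neg at h
    exact hne (funext h)
  have hVlt : Vπ π s0 < Vπ πQ s0 := by
    rcases lt_or_eq_of_le (hVle π hπ s0) with h | h
    · exact h
    · exfalso
      apply hs0
      funext a
      have := (gibbs (Q s0) (π s0) (hπ s0)).2.1 (by rw [← hVπ, ← hVQ]; exact h)
      rw [this a, hπQ s0 a]
  have h2 : ∑ s, μ0 s * Vπ π s < ∑ s, μ0 s * Vπ πQ s := by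
    apply Finset.sum_lt_sum (fun s _ =>
      mul_le_mul_of_nonneg_left (hVle π hπ s) (hμ0 s).le)
    exact ⟨s0, Finset.mem_univ s0, mul_lt_mul_of_pos_left hVlt (hμ0 s0)⟩
  have h1 : ∑ s, ∑ a, ρUN s a * rπ πQ s a ≤ ∑ s, ∑ a, ρUN s a * rπ π s a :=
    Finset.sum_le_sum fun s _ => Finset.sum_le_sum fun a _ =>
      mul_le_mul_of_nonneg_left (hrle π hπ s a) (hρUN s a)
  have h3 : ∑ s, ∑ a, ψ (rπ πQ s a) ≤ ∑ s, ∑ a, ψ (rπ π s a) :=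
    Finset.sum_le_sum fun s _ => Finset.sum_le_sum fun a _ =>
      hψmono (hrle π hπ s a)
  have : L πQ < L π := by
    rw [hL, hL]
    nlinarith
  rw [hLeq] at this
  exact lt_irrefl _ this
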